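/- Let G be a simple graph and let G_(1) be the graph obtained from G by attaching to each vertex v a new pendant vertex v' joined only to v. Then Z(G_(1); t, -1) = (t-1)^{n_G} · Z(G; t, 1), where n_G = |V(G)|. -/

import Mathlib

open Finset

/-- The set of edges of `G` contained in the vertex subset `S`. -/
def edgeIn {V : Type*} [Fintype V] [DecidableEq V] (G : SimpleGraph V) [DecidableRel G.Adj]
    (S : Finset V) : Finset (Sym2 V) :=
  G.edgeFinset.filter (· ∈ S.sym2)

/-- The bivariate Ising polynomial `Z(G;t,y)` evaluated at `t, y`. -/
def Zbi {V : Type*} [Fintype V] [DecidableEq V] (G : SimpleGraph V) [DecidableRel G.Adj]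
    (t y : ℚ) : ℚ :=
  ∑ S : Finset V, t ^ ((edgeIn G S).card + (edgeIn G Sᶜ).card) * y ^ S.card

/-- The graph `G₍₁₎`: attach to each vertex `v` of `G` a new pendant vertex `(v, true)`
joined only to `(v, false) = v`. -/
def pendant {V : Type*} (G : SimpleGraph V) : SimpleGraph (V × Bool) where
  Adj a b := (a.2 = false ∧ b.2 = false ∧ G.Adj a.1 b.1) ∨ (a.1 = b.1 ∧ a.2 ≠ b.2)
  symm := by
    constructor
    rintro ⟨u, bu⟩ ⟨v, bv⟩ (⟨h1, h2, h3⟩ | ⟨h1, h2⟩)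
    · exact Or.inl ⟨h2, h1, h3.symm⟩
    · exact Or.inr ⟨h1.symm, h2.symm⟩
  loopless := by
    constructor
    rintro ⟨u, bu⟩ (⟨_, _, h3⟩ | ⟨_, h2⟩)
    · exact G.ne_of_adj h3 rfl
    · exact h2 rfl

instance {V : Type*} [DecidableEq V] (G : SimpleGraph V) [DecidableRel G.Adj] :
    DecidableRel (pendant G).Adj := fun a b =>
  inferInstanceAs (Decidable ((a.2 = false ∧ b.2 = false ∧ G.Adj a.1 b.1) ∨ (a.1 = b.1 ∧ a.2 ≠ b.2)))

namespace ZbiPendantAux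

variable {V : Type*} [Fintype V] [DecidableEq V] (G : SimpleGraph V) [DecidableRel G.Adj]

/-- The subset of `V × Bool` with base part `A` and pendant part `B`. -/
def eAB (A B : Finset V) : Finset (V × Bool) :=
  A.image (fun v => (v, false)) ∪ B.image (fun v => (v, true))

omit [Fintype V] in
lemma mem_eAB {A B : Finset V} {v : V} {b : Bool} :
    (v, b) ∈ eAB A B ↔ (b = false ∧ v ∈ A) ∨ (b = true ∧ v ∈ B) := by
  cases b <;> simp [eAB, Prod.ext_iff, and_comm]

lemma compl_eAB (A B : Finset V) : (eAB A B)ᶜ = eAB Aᶜ Bᶜ := by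
  ext ⟨v, b⟩
  cases b <;> simp [mem_eAB]

omit [Fintype V] in
lemma card_eAB (A B : Finset V) : (eAB A B).card = A.card + B.card := by
  have hinjf : Function.Injective (fun v : V => (v, false)) :=
    fun a b h => congrArg Prod.fst h
  have hinjt : Function.Injective (fun v : V => (v, true)) :=
    fun a b h => congrArg Prod.fst h
  have hdisj : Disjoint (A.image (fun v => (v, false))) (B.image (fun v => (v, true))) := by
    rw [Finset.disjoint_left]
    rintro ⟨v, b⟩ h1 h2
    obtain ⟨a, -, ha⟩ := mem_image.mp h1
    obtain ⟨c, -, hc⟩ := mem_image.mp h2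
    exact absurd ((congrArg Prod.snd ha).trans (congrArg Prod.snd hc).symm) (by simp)
  rw [eAB, card_union_of_disjoint hdisj, card_image_of_injective _ hinjf,
    card_image_of_injective _ hinjt]

lemma edgeFinset_pendant :
    (pendant G).edgeFinset =
      G.edgeFinset.image (Sym2.map (fun v => (v, false))) ∪
        (univ : Finset V).image (fun v => s((v, false), (v, true))) := by
  ext e
  induction e using Sym2.ind with
  | _ x y =>
    obtain ⟨u, bu⟩ := x; obtain ⟨v, bv⟩ := y
    simp only [SimpleGraph.mem_edgeFinset, SimpleGraph.mem_edgeSet, mem_union, mem_image,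
      Sym2.exists, Sym2.map_pair_eq, Sym2.eq_iff, Prod.mk.injEq, mem_univ, true_and]
    show ((bu = false ∧ bv = false ∧ G.Adj u v) ∨ (u = v ∧ bu ≠ bv)) ↔ _
    cases bu <;> cases bv <;> simp
    · constructor
      · intro h; exact ⟨u, v, h, Or.inl ⟨rfl, rfl⟩⟩
      · rintro ⟨x, y, h, (⟨rfl, rfl⟩ | ⟨rfl, rfl⟩)⟩
        · exact h
        · exact h.symm
    · exact eq_comm

lemma card_edgeIn_pendant (A B : Finset V) :
    (edgeIn (pendant G) (eAB A B)).card = (edgeIn G A).card + (A ∩ B).card := by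
  have hinj : Function.Injective (fun v : V => (v, false)) :=
    fun a b h => congrArg Prod.fst h
  have hinjp : Function.Injective (fun v : V => s((v, false), (v, true))) := by
    intro a b h
    simp [Sym2.eq_iff] at h
    tauto
  have h1 : edgeIn (pendant G) (eAB A B) =
      (edgeIn G A).image (Sym2.map (fun v => (v, false))) ∪
        (A ∩ B).image (fun v => s((v, false), (v, true))) := by
    unfold edgeIn
    rw [edgeFinset_pendant, filter_union, filter_image, filter_image]
    congr 1
    · congr 1
      apply filter_congr
      intro e he
      induction e using Sym2.ind with
      | _ a b => simp [Finset.mk_mem_sym2_iff, mem_eAB]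
    · congr 1
      ext v
      simp [Finset.mk_mem_sym2_iff, mem_eAB]
  have hdisj : Disjoint ((edgeIn G A).image (Sym2.map (fun v => (v, false))))
      ((A ∩ B).image (fun v => s((v, false), (v, true)))) := by
    rw [Finset.disjoint_left]
    rintro e h1 h2
    simp only [mem_image] at h1 h2
    obtain ⟨e', -, rfl⟩ := h1
    obtain ⟨w, -, hw⟩ := h2
    induction e' using Sym2.ind with
    | _ a b => simp [Sym2.eq_iff, Prod.ext_iff] at hw
  rw [h1, card_union_of_disjoint hdisj, card_image_of_injective _ (Sym2.map.injective hinj),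
    card_image_of_injective _ hinjp]

omit [Fintype V] in
lemma prod_ite_one (s A : Finset V) (c : ℚ) :
    ∏ v ∈ s, (if v ∈ A then c else 1) = c ^ (s ∩ A).card := by
  rw [← Finset.prod_filter, Finset.prod_const, Finset.filter_mem_eq_inter]

lemma inner_sum (A : Finset V) (t : ℚ) :
    ∑ B : Finset V, t ^ ((A ∩ B).card + (Aᶜ ∩ Bᶜ).card) * (-1) ^ B.card
      = (-1) ^ A.card * (t - 1) ^ Fintype.card V := by
  have key : ∀ B : Finset V,
      t ^ ((A ∩ B).card + (Aᶜ ∩ Bᶜ).card) * (-1 : ℚ) ^ B.card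
        = (∏ v ∈ B, (if v ∈ A then -t else -1)) *
            ∏ v ∈ univ \ B, (if v ∈ A then 1 else t) := by
    intro B
    have e1 : ∏ v ∈ B, (if v ∈ A then -t else (-1 : ℚ))
        = (-1) ^ B.card * t ^ (A ∩ B).card := by
      calc ∏ v ∈ B, (if v ∈ A then -t else (-1 : ℚ))
          = ∏ v ∈ B, ((-1) * if v ∈ A then t else 1) := by
            apply prod_congr rfl; intro v hv; split <;> ring
        _ = (-1) ^ B.card * t ^ (B ∩ A).card := by
            rw [prod_mul_distrib, prod_const, prod_ite_one]
        _ = (-1) ^ B.card * t ^ (A ∩ B).card := by rw [inter_comm]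
    have e2 : ∏ v ∈ univ \ B, (if v ∈ A then (1 : ℚ) else t)
        = t ^ (Aᶜ ∩ Bᶜ).card := by
      calc ∏ v ∈ univ \ B, (if v ∈ A then (1 : ℚ) else t)
          = ∏ v ∈ Bᶜ, (if v ∈ Aᶜ then t else 1) := by
            rw [← compl_eq_univ_sdiff]
            apply prod_congr rfl
            intro v hv
            by_cases h : v ∈ A <;> simp [h]
        _ = t ^ (Bᶜ ∩ Aᶜ).card := prod_ite_one _ _ _
        _ = t ^ (Aᶜ ∩ Bᶜ).card := by rw [inter_comm]
    rw [e1, e2, pow_add]; ring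
  calc ∑ B : Finset V, t ^ ((A ∩ B).card + (Aᶜ ∩ Bᶜ).card) * (-1) ^ B.card
      = ∑ B ∈ (univ : Finset V).powerset,
          (∏ v ∈ B, (if v ∈ A then -t else -1)) *
            ∏ v ∈ univ \ B, (if v ∈ A then 1 else t) := by
        rw [powerset_univ]
        exact Finset.sum_congr rfl fun B _ => key B
    _ = ∏ v : V, ((if v ∈ A then -t else -1) + (if v ∈ A then 1 else t)) :=
        (Finset.prod_add _ _ _).symm
    _ = ∏ v : V, ((if v ∈ A then (-1 : ℚ) else 1) * (t - 1)) := by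
        apply prod_congr rfl; intro v hv; split <;> ring
    _ = (-1) ^ A.card * (t - 1) ^ Fintype.card V := by
        rw [prod_mul_distrib, prod_const, prod_ite_one, univ_inter, card_univ]

lemma eAB_bijective :
    Function.Bijective (fun p : Finset V × Finset V => eAB p.1 p.2) := by
  rw [Fintype.bijective_iff_injective_and_card]
  constructor
  · rintro ⟨A, B⟩ ⟨A', B'⟩ h
    simp only [Prod.mk.injEq]
    constructor
    · ext v
      have := Finset.ext_iff.mp h (v, false)
      simpa [mem_eAB] using this
    · ext v
      have := Finset.ext_iff.mp h (v, true)
      simpa [mem_eAB] using this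
  · simp only [Fintype.card_prod, Fintype.card_finset, Fintype.card_prod, Fintype.card_bool,
      ← pow_add]
    ring_nf

end ZbiPendantAux

open ZbiPendantAux in
theorem Zbi_pendant {V : Type*} [Fintype V] [DecidableEq V] (G : SimpleGraph V)
    [DecidableRel G.Adj] (t : ℚ) :
    Zbi (pendant G) t (-1) = (t - 1) ^ Fintype.card V * Zbi G t 1 := by
  classical
  have hsum := Fintype.sum_bijective _ (eAB_bijective (V := V))
      (fun p : Finset V × Finset V =>
        t ^ ((edgeIn (pendant G) (eAB p.1 p.2)).card +
            (edgeIn (pendant G) (eAB p.1 p.2)ᶜ).card) * (-1 : ℚ) ^ (eAB p.1 p.2).card)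
      (fun S : Finset (V × Bool) =>
        t ^ ((edgeIn (pendant G) S).card + (edgeIn (pendant G) Sᶜ).card) * (-1 : ℚ) ^ S.card)
      (fun p => rfl)
  rw [Zbi, ← hsum, Fintype.sum_prod_type]
  have hAB : ∀ A B : Finset V,
      t ^ ((edgeIn (pendant G) (eAB A B)).card + (edgeIn (pendant G) (eAB A B)ᶜ).card) *
          (-1 : ℚ) ^ (eAB A B).card
        = t ^ ((edgeIn G A).card + (edgeIn G Aᶜ).card) * (-1) ^ A.card *
            (t ^ ((A ∩ B).card + (Aᶜ ∩ Bᶜ).card) * (-1) ^ B.card) := by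
    intro A B
    rw [compl_eAB, card_edgeIn_pendant, card_edgeIn_pendant, card_eAB]
    simp only [pow_add]
    ring
  calc ∑ A : Finset V, ∑ B : Finset V,
        t ^ ((edgeIn (pendant G) (eAB A B)).card + (edgeIn (pendant G) (eAB A B)ᶜ).card) *
          (-1 : ℚ) ^ (eAB A B).card
      = ∑ A : Finset V, t ^ ((edgeIn G A).card + (edgeIn G Aᶜ).card) * (-1) ^ A.card *
          ((-1) ^ A.card * (t - 1) ^ Fintype.card V) := by
        apply Finset.sum_congr rfl
        intro A _
        rw [← inner_sum A t, Finset.mul_sum]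
        exact Finset.sum_congr rfl fun B _ => hAB A B
    _ = (t - 1) ^ Fintype.card V * Zbi G t 1 := by
        rw [Zbi, Finset.mul_sum]
        apply Finset.sum_congr rfl
        intro A _
        have h2 : ((-1 : ℚ)) ^ A.card * ((-1 : ℚ) ^ A.card * (t - 1) ^ Fintype.card V)
            = (t - 1) ^ Fintype.card V := by
          rw [← mul_assoc, ← mul_pow]; norm_num
        rw [one_pow, mul_assoc, h2]
        ring
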